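/- Let F be a field of characteristic 0, Ω a fixed algebraic closure of F, and σ an involution in the absolute Galois group Gal(F). Then the set P[σ] = {a ∈ F : there exists b ∈ Ω with b² = a and σ(b) = b} is an ordering of F: it is closed under addition and multiplication, P[σ] ∩ (−P[σ]) = {0}, and P[σ] ∪ (−P[σ]) = F. -/
import Mathlib

private lemma sq_cases {K : Type*} [Field K] {x y : K} (h : x ^ 2 = y ^ 2) :
    x = y ∨ x = -y := by
  have h0 : (x - y) * (x + y) = 0 := by linear_combination h
  rcases mul_eq_zero.mp h0 with h1 | h1
  · exact Or.inl (sub_eq_zero.mp h1)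
  · right; linear_combination h1

private lemma eq_neg_self_zero {K : Type*} [Field K] [CharZero K] {x : K}
    (h : x = -x) : x = 0 := by
  have h2 : (2 : K) * x = 0 := by linear_combination h
  rcases mul_eq_zero.mp h2 with h3 | h3
  · exact absurd h3 two_ne_zero
  · exact h3

/-- For a field `F` of characteristic `0` with algebraic closure `Ω`
and an involution `σ` in `Gal(F) = Ω ≃ₐ[F] Ω`, the set
`P[σ] = {a ∈ F | ∃ b ∈ Ω, b² = a and σ b = b}` is an ordering of `F`: it is closed
under addition and multiplication, `P ∩ (−P) = {0}`, and `P ∪ (−P) = F`. -/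
theorem ordering_from_involution
    (F Ω : Type*) [Field F] [CharZero F] [Field Ω] [Algebra F Ω] [IsAlgClosure F Ω]
    (σ : Ω ≃ₐ[F] Ω) (hσ2 : σ * σ = 1) (hσ1 : σ ≠ 1)
    (P : Set F) (hP : P = {a : F | ∃ b : Ω, b ^ 2 = algebraMap F Ω a ∧ σ b = b}) :
    (∀ a ∈ P, ∀ b ∈ P, a + b ∈ P) ∧
    (∀ a ∈ P, ∀ b ∈ P, a * b ∈ P) ∧
    (P ∩ (-P) = {0}) ∧
    (P ∪ (-P) = Set.univ) := by
  haveI : IsAlgClosed Ω := IsAlgClosure.isAlgClosed F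
  haveI : CharZero Ω := charZero_of_injective_algebraMap (algebraMap F Ω).injective
  have hσσ : ∀ x : Ω, σ (σ x) = x := fun x => by
    rw [← AlgEquiv.mul_apply, hσ2, AlgEquiv.one_apply]
  -- square root of -1
  obtain ⟨i, hi⟩ : ∃ i : Ω, i ^ 2 = -1 := IsAlgClosed.exists_pow_nat_eq (-1) zero_lt_two
  have hi0 : i ≠ 0 := by
    intro h; rw [h] at hi; norm_num at hi
  -- σ i = -i
  have hσi : σ i = -i := by
    have hsq : (σ i) ^ 2 = i ^ 2 := by
      rw [← map_pow, hi, map_neg, map_one]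
    rcases sq_cases hsq with hfix | h
    · -- derive a contradiction
      exfalso
      obtain ⟨g, hg⟩ : ∃ g : Ω, σ g ≠ g := by
        by_contra h
        push_neg at h
        exact hσ1 (AlgEquiv.ext h)
      set s : Ω := g - σ g with hs_def
      have hs0 : s ≠ 0 := sub_ne_zero.mpr (Ne.symm hg)
      have hσs : σ s = -s := by
        simp only [hs_def, map_sub, hσσ]; ring
      obtain ⟨u, hu⟩ : ∃ u : Ω, u ^ 2 = s := IsAlgClosed.exists_pow_nat_eq s zero_lt_two
      have hu0 : u ≠ 0 := by
        intro h; rw [h] at hu; exact hs0 (by simpa using hu.symm)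
      have hsq2 : (σ u) ^ 2 = (i * u) ^ 2 := by
        rw [← map_pow, hu, hσs, mul_pow, hi, hu]; ring
      have hcontra : u = -u := by
        rcases sq_cases hsq2 with h1 | h1
        · have huu : u = σ (σ u) := (hσσ u).symm
          rw [h1, map_mul, hfix, h1] at huu
          linear_combination huu + u * hi
        · have huu : u = σ (σ u) := (hσσ u).symm
          rw [h1, map_neg, map_mul, hfix, h1] at huu
          linear_combination huu + u * hi
      exact hu0 (eq_neg_self_zero hcontra)
    · exact h
  subst hP
  refine ⟨?_, ?_, ?_, ?_⟩
  · -- addition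
    rintro a ⟨b₁, hb₁, hσb₁⟩ b ⟨b₂, hb₂, hσb₂⟩
    obtain ⟨w, hw⟩ : ∃ w : Ω, w ^ 2 = b₁ + i * b₂ :=
      IsAlgClosed.exists_pow_nat_eq _ zero_lt_two
    refine ⟨w * σ w, ?_, ?_⟩
    · have key : (w * σ w) ^ 2 = (b₁ + i * b₂) * (b₁ - i * b₂) := by
        rw [mul_pow, hw, ← map_pow, hw, map_add, map_mul, hσi, hσb₁, hσb₂]
        ring
      rw [key, map_add, ← hb₁, ← hb₂]
      linear_combination (-(b₂ : Ω) ^ 2) * hi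
    · rw [map_mul, hσσ, mul_comm]
  · -- multiplication
    rintro a ⟨b₁, hb₁, hσb₁⟩ b ⟨b₂, hb₂, hσb₂⟩
    exact ⟨b₁ * b₂, by rw [mul_pow, hb₁, hb₂, map_mul], by rw [map_mul, hσb₁, hσb₂]⟩
  · -- P ∩ -P = {0}
    ext a
    simp only [Set.mem_inter_iff, Set.mem_neg, Set.mem_setOf_eq, Set.mem_singleton_iff]
    constructor
    · rintro ⟨⟨b, hb, hσb⟩, ⟨c, hc, hσc⟩⟩
      by_contra ha
      have hιa : algebraMap F Ω a ≠ 0 := fun h =>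
        ha ((algebraMap F Ω).injective (by simpa using h))
      have hb0 : b ≠ 0 := fun h => hιa (by rw [← hb, h]; ring)
      have hc0 : c ≠ 0 := by
        intro h
        apply hιa
        have h0 : (0 : Ω) = algebraMap F Ω (-a) := by rw [← hc, h]; ring
        rw [map_neg] at h0
        linear_combination h0
      have hbc : b ^ 2 = (i * c) ^ 2 := by
        rw [mul_pow, hi, hc, map_neg, hb]; ring
      have hic : i * c ≠ 0 := mul_ne_zero hi0 hc0
      have hσic : σ (i * c) = -(i * c) := by rw [map_mul, hσi, hσc]; ring
      rcases sq_cases hbc with h | h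
      · rw [h, hσic] at hσb
        exact hic (eq_neg_self_zero hσb.symm)
      · rw [h, map_neg, hσic] at hσb
        exact hic (eq_neg_self_zero (by linear_combination hσb))
    · rintro rfl
      exact ⟨⟨0, by simp, map_zero σ⟩, ⟨0, by simp, map_zero σ⟩⟩
  · -- P ∪ -P = univ
    ext a
    simp only [Set.mem_union, Set.mem_neg, Set.mem_setOf_eq, Set.mem_univ, iff_true]
    obtain ⟨z, hz⟩ : ∃ z : Ω, z ^ 2 = algebraMap F Ω a :=
      IsAlgClosed.exists_pow_nat_eq _ zero_lt_two
    have hsq : (σ z) ^ 2 = z ^ 2 := by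
      rw [← map_pow, hz, AlgEquiv.commutes]
    rcases sq_cases hsq with h | h
    · exact Or.inl ⟨z, hz, h⟩
    · refine Or.inr ⟨i * z, ?_, ?_⟩
      · rw [mul_pow, hi, map_neg, hz]; ring
      · rw [map_mul, hσi, h]; ring
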